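/- Suppose P¹({∅}) > 0 and P²({∅}) > 0, and that for X₁, X₂ i.i.d. with distribution P¹⊗P² on X², the random variable φ^{coinc}_δ(X₁¹,X₁²) is not almost surely zero. Then the coincidence kernel h (defined via h(x,y) = ½(φ^{coinc}_δ(x¹,x²)+φ^{coinc}_δ(y¹,y²)−φ^{coinc}_δ(x¹,y²)−φ^{coinc}_δ(y¹,x²))) is non-degenerate under independence: Var(E[h(X₁,X₂) | X₁]) ≠ 0. In fact, E[h((∅,∅),X₂)] = ½ E[φ^{coinc}_δ(X₂¹,X₂²)] > 0. -/

import Mathlib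

open MeasureTheory ProbabilityTheory

instance : MeasurableSpace (Finset ℝ) := ⊤

set_option maxHeartbeats 1000000

/-- The coincidence count with delay `δ` (as a real number). -/
noncomputable def phiCoinc (δ : ℝ) (a b : Finset ℝ) : ℝ :=
  (((a ×ˢ b).filter (fun p => |p.1 - p.2| ≤ δ)).card : ℝ)

/-- The coincidence kernel `h_{φ^{coinc}_δ}`. -/
noncomputable def hCoinc (δ : ℝ) (x y : Finset ℝ × Finset ℝ) : ℝ :=
  (phiCoinc δ x.1 x.2 + phiCoinc δ y.1 y.2 - phiCoinc δ x.1 y.2 - phiCoinc δ y.1 x.2) / 2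

/-- If `P¹({∅}) > 0`, `P²({∅}) > 0` and the coincidence count is not a.s. zero under
`P¹⊗P²`, then the coincidence kernel is non-degenerate under independence:
`Var(E[h(X₁,X₂)|X₁]) ≠ 0`; in fact `E[h((∅,∅),X₂)] = ½E[φ^{coinc}_δ(X₂¹,X₂²)] > 0`. -/
theorem stmt_10 (δ : ℝ) (hδ : 0 < δ)
    (P1 P2 : Measure (Finset ℝ)) [IsProbabilityMeasure P1] [IsProbabilityMeasure P2]
    (h1 : 0 < P1 {(∅ : Finset ℝ)}) (h2 : 0 < P2 {(∅ : Finset ℝ)})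
    (hint : Integrable (fun p : Finset ℝ × Finset ℝ => phiCoinc δ p.1 p.2) (P1.prod P2))
    (hL2 : MemLp (fun x : Finset ℝ × Finset ℝ =>
      ∫ y, hCoinc δ x y ∂(P1.prod P2)) 2 (P1.prod P2))
    (hnz : ¬ (∀ᵐ p ∂(P1.prod P2), phiCoinc δ p.1 p.2 = 0)) :
    variance (fun x : Finset ℝ × Finset ℝ =>
        ∫ y, hCoinc δ x y ∂(P1.prod P2)) (P1.prod P2) ≠ 0 ∧
      (∫ y, hCoinc δ (∅, ∅) y ∂(P1.prod P2))
        = (1 / 2) * ∫ p, phiCoinc δ p.1 p.2 ∂(P1.prod P2) ∧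
      0 < ∫ y, hCoinc δ (∅, ∅) y ∂(P1.prod P2) := by
  set μ : Measure (Finset ℝ × Finset ℝ) := P1.prod P2 with hμ
  set φ : Finset ℝ × Finset ℝ → ℝ := fun p => phiCoinc δ p.1 p.2 with hφ
  set g : Finset ℝ × Finset ℝ → ℝ := fun x => ∫ y, hCoinc δ x y ∂μ with hg
  set M : ℝ := ∫ p, φ p ∂μ with hM
  -- empty configurations give zero coincidences
  have hempty_l : ∀ b, phiCoinc δ ∅ b = 0 := fun b => by simp [phiCoinc]
  have hempty_r : ∀ a, phiCoinc δ a ∅ = 0 := fun a => by simp [phiCoinc]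
  -- second claim
  have heq : (fun y : Finset ℝ × Finset ℝ => hCoinc δ (∅, ∅) y)
      = fun y => (1/2) * φ y := by
    funext y
    simp [hCoinc, hempty_l, hempty_r, hφ]
    ring
  have eq2 : g (∅, ∅) = (1/2) * M := by
    rw [hg]
    simp only [heq]
    rw [integral_const_mul]
  -- positivity of M
  have hφnonneg : ∀ p, 0 ≤ φ p := fun p => by
    simp only [hφ, phiCoinc]
    positivity
  have Mpos : 0 < M := by
    rw [hM]
    rw [integral_pos_iff_support_of_nonneg_ae (ae_of_all _ hφnonneg) hint]
    rw [pos_iff_ne_zero]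
    intro h0
    exact hnz (ae_iff.mpr (by simpa [Function.support] using h0))
  have gpos : 0 < g (∅, ∅) := by
    rw [eq2]; exact mul_pos (by norm_num) Mpos
  refine ⟨?_, eq2, gpos⟩
  -- integrability of each term of hCoinc on μ ⊗ μ
  have key : ∀ (T : (Finset ℝ × Finset ℝ) × (Finset ℝ × Finset ℝ) → Finset ℝ × Finset ℝ),
      Measurable T → (μ.prod μ).map T = μ →
      Integrable (fun z => phiCoinc δ (T z).1 (T z).2) (μ.prod μ) := by
    intro T hT hm
    have h1' : Integrable φ ((μ.prod μ).map T) := by rw [hm]; exact hint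
    have h2' : AEStronglyMeasurable φ ((μ.prod μ).map T) := by
      rw [hm]; exact hint.aestronglyMeasurable
    exact (integrable_map_measure h2' hT.aemeasurable).mp h1'
  have hmfst : (μ.prod μ).map Prod.fst = μ := by
    simp [Measure.map_fst_prod, measure_univ]
  have hmsnd : (μ.prod μ).map Prod.snd = μ := by
    simp [Measure.map_snd_prod, measure_univ]
  have hmT3 : (μ.prod μ).map (Prod.map Prod.fst Prod.snd) = μ := by
    rw [← Measure.map_prod_map _ _ measurable_fst measurable_snd]
    rw [hμ, Measure.map_fst_prod, Measure.map_snd_prod]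
    simp [measure_univ]
  have hmT4 : (μ.prod μ).map (fun z : (Finset ℝ × Finset ℝ) × (Finset ℝ × Finset ℝ) =>
      ((z.2.1 : Finset ℝ), (z.1.2 : Finset ℝ))) = μ := by
    have : (fun z : (Finset ℝ × Finset ℝ) × (Finset ℝ × Finset ℝ) => ((z.2.1), (z.1.2)))
        = (Prod.map Prod.fst Prod.snd) ∘ Prod.swap := rfl
    rw [this, ← Measure.map_map (measurable_fst.prodMap measurable_snd) measurable_swap,
      Measure.prod_swap, hmT3]
  have hT3meas : Measurable (Prod.map (Prod.fst : Finset ℝ × Finset ℝ → Finset ℝ)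
      (Prod.snd : Finset ℝ × Finset ℝ → Finset ℝ)) :=
    measurable_fst.prodMap measurable_snd
  have hA := key Prod.fst measurable_fst hmfst
  have hB := key Prod.snd measurable_snd hmsnd
  have hC := key _ hT3meas hmT3
  have hD := key _ ((measurable_fst.comp measurable_snd).prodMk
      (measurable_snd.comp measurable_fst)) hmT4
  have Ih : Integrable (fun z : (Finset ℝ × Finset ℝ) × (Finset ℝ × Finset ℝ) =>
      hCoinc δ z.1 z.2) (μ.prod μ) := by
    have := (((hA.add hB).sub hC).sub hD).div_const 2
    exact this.congr (ae_of_all _ fun z => by simp [hCoinc, Prod.map])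
  -- values of the single-term integrals
  have keyI : ∀ (T : (Finset ℝ × Finset ℝ) × (Finset ℝ × Finset ℝ) → Finset ℝ × Finset ℝ),
      Measurable T → (μ.prod μ).map T = μ →
      ∫ z, phiCoinc δ (T z).1 (T z).2 ∂(μ.prod μ) = M := by
    intro T hT hm
    have h2' : AEStronglyMeasurable φ ((μ.prod μ).map T) := by
      rw [hm]; exact hint.aestronglyMeasurable
    calc ∫ z, phiCoinc δ (T z).1 (T z).2 ∂(μ.prod μ)
        = ∫ p, φ p ∂((μ.prod μ).map T) := (integral_map hT.aemeasurable h2').symm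
      _ = M := by rw [hm, hM]
  have hC' : Integrable (fun z : (Finset ℝ × Finset ℝ) × (Finset ℝ × Finset ℝ) =>
      phiCoinc δ z.1.1 z.2.2) (μ.prod μ) := key (Prod.map Prod.fst Prod.snd) hT3meas hmT3
  have hD' : Integrable (fun z : (Finset ℝ × Finset ℝ) × (Finset ℝ × Finset ℝ) =>
      phiCoinc δ z.2.1 z.1.2) (μ.prod μ) := key (fun z => (z.2.1, z.1.2))
      ((measurable_fst.comp measurable_snd).prodMk
      (measurable_snd.comp measurable_fst)) hmT4
  have hIA : ∫ z : (Finset ℝ × Finset ℝ) × (Finset ℝ × Finset ℝ),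
      phiCoinc δ z.1.1 z.1.2 ∂(μ.prod μ) = M := keyI Prod.fst measurable_fst hmfst
  have hIB : ∫ z : (Finset ℝ × Finset ℝ) × (Finset ℝ × Finset ℝ),
      phiCoinc δ z.2.1 z.2.2 ∂(μ.prod μ) = M := keyI Prod.snd measurable_snd hmsnd
  have hIC : ∫ z : (Finset ℝ × Finset ℝ) × (Finset ℝ × Finset ℝ),
      phiCoinc δ z.1.1 z.2.2 ∂(μ.prod μ) = M := keyI (Prod.map Prod.fst Prod.snd) hT3meas hmT3
  have hID : ∫ z : (Finset ℝ × Finset ℝ) × (Finset ℝ × Finset ℝ),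
      phiCoinc δ z.2.1 z.1.2 ∂(μ.prod μ) = M := keyI (fun z => (z.2.1, z.1.2))
      ((measurable_fst.comp measurable_snd).prodMk (measurable_snd.comp measurable_fst)) hmT4
  have Izero : ∫ z, hCoinc δ z.1 z.2 ∂(μ.prod μ) = 0 := by
    have hrw : (fun z : (Finset ℝ × Finset ℝ) × (Finset ℝ × Finset ℝ) => hCoinc δ z.1 z.2)
        = fun z => (phiCoinc δ z.1.1 z.1.2 + phiCoinc δ z.2.1 z.2.2
            - phiCoinc δ z.1.1 z.2.2 - phiCoinc δ z.2.1 z.1.2) / 2 := rfl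
    have hAB : Integrable (fun z : (Finset ℝ × Finset ℝ) × (Finset ℝ × Finset ℝ) =>
        phiCoinc δ z.1.1 z.1.2 + phiCoinc δ z.2.1 z.2.2) (μ.prod μ) := hA.add hB
    have hABC : Integrable (fun z : (Finset ℝ × Finset ℝ) × (Finset ℝ × Finset ℝ) =>
        phiCoinc δ z.1.1 z.1.2 + phiCoinc δ z.2.1 z.2.2 - phiCoinc δ z.1.1 z.2.2) (μ.prod μ) :=
      hAB.sub hC'
    rw [hrw]
    rw [integral_div, integral_sub hABC hD', integral_sub hAB hC', integral_add hA hB,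
      hIA, hIB, hIC, hID]
    ring
  have hmean : ∫ x, g x ∂μ = 0 := by
    rw [hg]
    have := MeasureTheory.integral_integral (f := fun x y => hCoinc δ x y) (μ := μ) (ν := μ) Ih
    rw [this]
    exact Izero
  -- variance ≠ 0
  intro hvar
  have hev : evariance g μ = 0 := by
    have hlt : evariance g μ < ⊤ := hL2.evariance_lt_top
    have := hvar
    rw [variance] at this
    rcases (ENNReal.toReal_eq_zero_iff _).mp this with h | h
    · exact h
    · exact absurd h hlt.ne
  have hgae : g =ᵐ[μ] fun _ => ∫ x, g x ∂μ :=
    (evariance_eq_zero_iff hL2.aestronglyMeasurable.aemeasurable).mp hev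
  have hgae0 : g =ᵐ[μ] fun _ => (0 : ℝ) := by rwa [hmean] at hgae
  have hnull : μ {x | ¬ g x = 0} = 0 := ae_iff.mp hgae0
  have hsub : ({((∅ : Finset ℝ), (∅ : Finset ℝ))} : Set (Finset ℝ × Finset ℝ))
      ⊆ {x | ¬ g x = 0} := by
    intro x hx
    rw [Set.mem_singleton_iff] at hx
    subst hx
    exact ne_of_gt gpos
  have hle : μ ({((∅ : Finset ℝ), (∅ : Finset ℝ))} : Set (Finset ℝ × Finset ℝ)) = 0 :=
    le_antisymm (hnull ▸ measure_mono hsub) zero_le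
  have hpos : 0 < μ ({((∅ : Finset ℝ), (∅ : Finset ℝ))} : Set (Finset ℝ × Finset ℝ)) := by
    rw [hμ, ← Set.singleton_prod_singleton, Measure.prod_prod]
    exact ENNReal.mul_pos h1.ne' h2.ne'
  rw [hle] at hpos
  exact lt_irrefl _ hpos
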